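/- Let G be a topological group acting continuously on a locally compact Hausdorff space, let H ≤ G be a subgroup, and let B be a Banach algebra on which H acts by isometric algebra automorphisms. Then the set Ind_H^G B of continuous functions f : G → B satisfying f(g h⁻¹) = h · f(g) for all g ∈ G, h ∈ H, and such that gH ↦ ‖f(g)‖ vanishes at infinity on G/H (note ‖f(g)‖ depends only on gH), is a closed subalgebra of the Banach algebra of bounded continuous B-valued functions on G, and the formula (g·f)(g') = f(g⁻¹ g') defines an action of G on Ind_H^G B by isometric algebra automorphisms. -/

import Mathlib

open Set

section AuxInduced

variable {G : Type*} [Group G] [TopologicalSpace G] [IsTopologicalGroup G]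
  {H : Subgroup G} {B : Type*} [NormedRing B] [NormedAlgebra ℂ B]

private lemma aux_mono {A A' : Set G} (h : A ⊆ A')
    (hK : IsCompact (closure ((QuotientGroup.mk : G → G ⧸ H) '' A'))) :
    IsCompact (closure ((QuotientGroup.mk : G → G ⧸ H) '' A)) :=
  hK.of_isClosed_subset isClosed_closure (closure_mono (Set.image_mono h))

private lemma aux_bound (ρ : H →* (B ≃ₐ[ℂ] B)) (hiso : ∀ (h : H) (b : B), ‖ρ h b‖ = ‖b‖)
    (f : G → B) (hc : Continuous f)
    (heq : ∀ (g : G) (h : H), f (g * (h : G)⁻¹) = ρ h (f g))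
    (hv : ∀ ε > 0, IsCompact (closure ((QuotientGroup.mk : G → G ⧸ H) '' {g | ε ≤ ‖f g‖}))) :
    ∃ C : ℝ, ∀ g, ‖f g‖ ≤ C := by
  have hdes : ∀ a b : G, @Setoid.r _ (QuotientGroup.leftRel H) a b → ‖f a‖ = ‖f b‖ := by
    intro a b hab
    rw [QuotientGroup.leftRel_apply] at hab
    set h : H := ⟨a⁻¹ * b, hab⟩ with hh
    have hb : b = a * ((h⁻¹ : H) : G)⁻¹ := by
      simp [hh, mul_inv_cancel_left]
    rw [hb, heq a h⁻¹, hiso]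
  have hφc : Continuous (Quotient.lift (fun g => ‖f g‖) hdes : G ⧸ H → ℝ) :=
    hc.norm.quotient_lift hdes
  have hK : IsCompact (closure ((QuotientGroup.mk : G → G ⧸ H) '' {g | 1 ≤ ‖f g‖})) :=
    hv 1 one_pos
  obtain ⟨C, hC⟩ := (hK.image hφc).bddAbove
  refine ⟨max C 1, fun g => ?_⟩
  rcases le_or_gt 1 ‖f g‖ with h1 | h1
  · have hm : (QuotientGroup.mk g : G ⧸ H) ∈
        closure ((QuotientGroup.mk : G → G ⧸ H) '' {g | 1 ≤ ‖f g‖}) :=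
      subset_closure ⟨g, h1, rfl⟩
    exact le_max_of_le_left (hC ⟨_, hm, rfl⟩)
  · exact le_max_of_le_right h1.le

end AuxInduced

/-- The induced algebra `Ind_H^G B`: the set of continuous `f : G → B` with
`f(g h⁻¹) = h · f(g)` whose norm function vanishes at infinity on `G/H` consists of
bounded functions, is closed under the algebra operations and uniform limits (i.e. it is
a closed subalgebra of the bounded continuous `B`-valued functions), and
`(g·f)(g') = f(g⁻¹ g')` defines a `G`-action on it by isometric algebra automorphisms. -/
theorem induced_algebra_closed_subalgebra_and_action
    {G : Type*} [Group G] [TopologicalSpace G] [IsTopologicalGroup G]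
    (H : Subgroup G) (hH : IsClosed (H : Set G))
    {B : Type*} [NormedRing B] [NormedAlgebra ℂ B] [CompleteSpace B]
    (ρ : H →* (B ≃ₐ[ℂ] B)) (hiso : ∀ (h : H) (b : B), ‖ρ h b‖ = ‖b‖) :
    let P : (G → B) → Prop := fun f =>
      Continuous f ∧ (∀ (g : G) (h : H), f (g * (h : G)⁻¹) = ρ h (f g)) ∧
      (∀ ε > 0, IsCompact (closure ((QuotientGroup.mk : G → G ⧸ H) '' {g | ε ≤ ‖f g‖})))
    -- membership forces boundedness, so `Ind_H^G B` sits inside the bounded continuous functions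
    (∀ f, P f → ∃ C : ℝ, ∀ g, ‖f g‖ ≤ C) ∧
    -- subalgebra: closed under the (pointwise) algebra operations
    (∀ f₁ f₂, P f₁ → P f₂ → P (f₁ + f₂) ∧ P (f₁ * f₂)) ∧
    (∀ (c : ℂ) f, P f → P (c • f)) ∧
    -- closed for the supremum norm: uniform limits of members are members
    (∀ f : G → B, Continuous f → (∃ C : ℝ, ∀ g, ‖f g‖ ≤ C) →
      (∀ ε > 0, ∃ f', P f' ∧ ∀ g, ‖f g - f' g‖ ≤ ε) → P f) ∧
    -- the translation action preserves `Ind_H^G B` ...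
    (∀ (g₀ : G) (f), P f → P (fun g => f (g₀⁻¹ * g))) ∧
    -- ... is isometric for the supremum norm ...
    (∀ (g₀ : G) (f), P f → (⨆ g, ‖f (g₀⁻¹ * g)‖) = ⨆ g, ‖f g‖) ∧
    -- ... acts by algebra automorphisms ...
    (∀ (g₀ : G) (f₁ f₂ : G → B),
      (fun g => (f₁ + f₂) (g₀⁻¹ * g)) = (fun g => f₁ (g₀⁻¹ * g)) + (fun g => f₂ (g₀⁻¹ * g)) ∧
      (fun g => (f₁ * f₂) (g₀⁻¹ * g)) = (fun g => f₁ (g₀⁻¹ * g)) * (fun g => f₂ (g₀⁻¹ * g)) ∧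
      ∀ c : ℂ, (fun g => (c • f₁) (g₀⁻¹ * g)) = c • (fun g => f₁ (g₀⁻¹ * g))) ∧
    -- ... and is a group action
    (∀ (g₁ g₂ : G) (f : G → B),
      (fun g => f ((g₁ * g₂)⁻¹ * g)) = (fun g => (fun g' => f (g₂⁻¹ * g')) (g₁⁻¹ * g)) ∧
      (fun g => f ((1 : G)⁻¹ * g)) = f) := by
  intro P
  refine ⟨fun f hf => aux_bound ρ hiso f hf.1 hf.2.1 hf.2.2, ?_, ?_, ?_, ?_, ?_, ?_, ?_⟩
  · -- add and mul
    rintro f₁ f₂ ⟨hc₁, he₁, hv₁⟩ ⟨hc₂, he₂, hv₂⟩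
    constructor
    · refine ⟨hc₁.add hc₂, fun g h => ?_, fun ε hε => ?_⟩
      · simp only [Pi.add_apply, he₁, he₂, map_add]
      · have hsub : {g | ε ≤ ‖(f₁ + f₂) g‖} ⊆ {g | ε/2 ≤ ‖f₁ g‖} ∪ {g | ε/2 ≤ ‖f₂ g‖} := by
          intro g hg
          simp only [Set.mem_setOf_eq, Pi.add_apply] at hg
          rcases le_or_gt (ε/2) ‖f₁ g‖ with h1 | h1
          · exact Or.inl h1
          · refine Or.inr ?_
            have := norm_add_le (f₁ g) (f₂ g)
            simp only [Set.mem_setOf_eq]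
            linarith
        have h1 := hv₁ (ε/2) (by positivity)
        have h2 := hv₂ (ε/2) (by positivity)
        refine (h1.union h2).of_isClosed_subset isClosed_closure ?_
        calc closure ((QuotientGroup.mk : G → G ⧸ H) '' {g | ε ≤ ‖(f₁ + f₂) g‖})
            ⊆ closure ((QuotientGroup.mk : G → G ⧸ H) '' ({g | ε/2 ≤ ‖f₁ g‖} ∪ {g | ε/2 ≤ ‖f₂ g‖})) :=
              closure_mono (Set.image_mono hsub)
          _ ⊆ _ := by rw [Set.image_union, closure_union]
    · refine ⟨hc₁.mul hc₂, fun g h => ?_, fun ε hε => ?_⟩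
      · simp only [Pi.mul_apply, he₁, he₂, map_mul]
      · obtain ⟨C, hC⟩ := aux_bound ρ hiso f₁ hc₁ he₁ hv₁
        have hC1 : ∀ g, ‖f₁ g‖ ≤ max C 1 := fun g => le_max_of_le_left (hC g)
        have hM : (0:ℝ) < max C 1 := lt_of_lt_of_le one_pos (le_max_right _ _)
        refine aux_mono (A' := {g | ε / max C 1 ≤ ‖f₂ g‖}) ?_ (hv₂ _ (by positivity))
        intro g hg
        simp only [Set.mem_setOf_eq, Pi.mul_apply] at hg ⊢
        rw [div_le_iff₀ hM]
        calc ε ≤ ‖f₁ g * f₂ g‖ := hg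
          _ ≤ ‖f₁ g‖ * ‖f₂ g‖ := norm_mul_le _ _
          _ ≤ max C 1 * ‖f₂ g‖ := mul_le_mul_of_nonneg_right (hC1 g) (norm_nonneg _)
          _ = ‖f₂ g‖ * max C 1 := mul_comm _ _
  · -- smul
    rintro c f ⟨hc, he, hv⟩
    refine ⟨hc.const_smul c, fun g h => ?_, fun ε hε => ?_⟩
    · simp only [Pi.smul_apply, he, map_smul]
    · rcases eq_or_ne c 0 with rfl | hc0
      · have hemp : {g : G | ε ≤ ‖((0:ℂ) • f) g‖} = ∅ := by
          ext g
          simp only [Set.mem_setOf_eq, Pi.smul_apply, zero_smul, norm_zero,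
            Set.mem_empty_iff_false, iff_false]
          exact hε.not_ge
        rw [hemp]
        simpa using isCompact_empty
      · have hcpos : (0:ℝ) < ‖c‖ := norm_pos_iff.mpr hc0
        refine aux_mono (A' := {g | ε / ‖c‖ ≤ ‖f g‖}) ?_ (hv _ (div_pos hε hcpos))
        intro g hg
        simp only [Set.mem_setOf_eq, Pi.smul_apply, norm_smul] at hg ⊢
        rw [div_le_iff₀' hcpos]
        exact hg
  · -- closed under uniform limits
    intro f hcf _ happ
    refine ⟨hcf, fun g h => ?_, fun ε hε => ?_⟩
    · have key : ∀ ε > (0:ℝ), ‖f (g * (h:G)⁻¹) - ρ h (f g)‖ ≤ ε := by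
        intro ε hε
        obtain ⟨f', ⟨_, he', _⟩, hd⟩ := happ (ε/2) (by positivity)
        calc ‖f (g * (h:G)⁻¹) - ρ h (f g)‖
            ≤ ‖f (g * (h:G)⁻¹) - f' (g * (h:G)⁻¹)‖ + ‖f' (g * (h:G)⁻¹) - ρ h (f g)‖ := by
              simpa using norm_add_le (f (g * (h:G)⁻¹) - f' (g * (h:G)⁻¹))
                (f' (g * (h:G)⁻¹) - ρ h (f g))
          _ = ‖f (g * (h:G)⁻¹) - f' (g * (h:G)⁻¹)‖ + ‖f' g - f g‖ := by
              rw [he' g h, ← map_sub, hiso]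
          _ ≤ ε/2 + ε/2 := add_le_add (hd _) (by rw [norm_sub_rev]; exact hd g)
          _ = ε := add_halves ε
      have h0 : ‖f (g * (h:G)⁻¹) - ρ h (f g)‖ ≤ 0 := by
        by_contra hcon
        push_neg at hcon
        have := key _ (half_pos hcon)
        linarith
      exact sub_eq_zero.mp (norm_le_zero_iff.mp h0)
    · obtain ⟨f', hf', hd⟩ := happ (ε/2) (by positivity)
      refine aux_mono (A' := {g | ε/2 ≤ ‖f' g‖}) ?_ (hf'.2.2 (ε/2) (by positivity))
      intro g hg
      simp only [Set.mem_setOf_eq] at hg ⊢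
      have h1 := hd g
      have h2 := norm_sub_norm_le (f g) (f' g)
      linarith
  · -- translation preserves P
    rintro g₀ f ⟨hc, he, hv⟩
    refine ⟨hc.comp (continuous_const.mul continuous_id), fun g h => ?_, fun ε hε => ?_⟩
    · show f (g₀⁻¹ * (g * (h:G)⁻¹)) = ρ h (f (g₀⁻¹ * g))
      rw [← mul_assoc]
      exact he (g₀⁻¹ * g) h
    · have hset : (QuotientGroup.mk : G → G ⧸ H) '' {g | ε ≤ ‖(fun g => f (g₀⁻¹ * g)) g‖}
          = (g₀ • ·) '' ((QuotientGroup.mk : G → G ⧸ H) '' {g | ε ≤ ‖f g‖}) := by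
        ext x
        constructor
        · rintro ⟨g, hg, rfl⟩
          refine ⟨QuotientGroup.mk (g₀⁻¹ * g), ⟨g₀⁻¹ * g, hg, rfl⟩, ?_⟩
          show QuotientGroup.mk (g₀ * (g₀⁻¹ * g)) = (QuotientGroup.mk g : G ⧸ H)
          rw [mul_inv_cancel_left]
        · rintro ⟨y, ⟨a, ha, rfl⟩, rfl⟩
          refine ⟨g₀ * a, ?_, rfl⟩
          show ε ≤ ‖f (g₀⁻¹ * (g₀ * a))‖
          rwa [inv_mul_cancel_left]
      have hcl := (Homeomorph.smul g₀ : G ⧸ H ≃ₜ G ⧸ H).image_closure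
        ((QuotientGroup.mk : G → G ⧸ H) '' {g | ε ≤ ‖f g‖})
      have hco : ⇑(Homeomorph.smul g₀ : G ⧸ H ≃ₜ G ⧸ H) = (g₀ • · : G ⧸ H → G ⧸ H) := rfl
      rw [hco] at hcl
      rw [hset, ← hcl]
      exact (hv ε hε).image (continuous_const_smul g₀)
  · -- isometry
    intro g₀ f _
    have hs : Function.Surjective (fun g : G => g₀⁻¹ * g) :=
      fun g => ⟨g₀ * g, inv_mul_cancel_left g₀ g⟩
    show sSup (Set.range fun g => ‖f (g₀⁻¹ * g)‖) = sSup (Set.range fun g => ‖f g‖)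
    congr 1
    exact hs.range_comp fun g => ‖f g‖
  · exact fun g₀ f₁ f₂ => ⟨rfl, rfl, fun c => rfl⟩
  · intro g₁ g₂ f
    constructor
    · funext g
      rw [mul_inv_rev, mul_assoc]
    · funext g
      rw [inv_one, one_mul]
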